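/- The constant paths π(t) = 1, w(t) = (ε−1)/ε, i(t) = (1−β)/β, Y(t) = 1/(1+γ) satisfy, for every t ∈ ℕ, all three equilibrium equations: the Rotemberg Phillips curve (π(t)−1)·π(t) = (ε/φ)·(w(t) − (ε−1)/ε) + β·(Y(t+1)/Y(t))·(π(t+1)−1)·π(t+1), the Taylor rule i(t+1) = r* + θ·(π(t)−1) with r* := 1/β − 1, and the aggregate Euler equation w(t+1) = β·((1+i(t+1))/π(t+1))·w(t). (This is the aggregate part of Proposition 1: the economy is in steady state with unit gross inflation, wage (ε−1)/ε, nominal rate (1−β)/β and output 1/(1+γ) from period 1 onward.) -/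

import Mathlib

/-- Proposition 1 (aggregate part): the constant paths π(t)=1, w(t)=(ε−1)/ε,
i(t)=(1−β)/β, Y(t)=1/(1+γ) satisfy the Phillips curve, the Taylor rule with
intercept r* = 1/β − 1, and the aggregate Euler equation, for every t. -/
theorem stmt_0 (β ε φ γ θ : ℝ)
    (hβ0 : 0 < β) (hβ1 : β < 1) (hε : 1 < ε) (hφ : 0 < φ) (hγ : 0 < γ)
    (π w i Y : ℕ → ℝ)
    (hπ : ∀ t, π t = 1)
    (hw : ∀ t, w t = (ε - 1) / ε)
    (hi : ∀ t, i t = (1 - β) / β)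
    (hY : ∀ t, Y t = 1 / (1 + γ)) :
    ∀ t : ℕ,
      (π t - 1) * π t
          = (ε / φ) * (w t - (ε - 1) / ε)
            + β * (Y (t + 1) / Y t) * ((π (t + 1) - 1) * π (t + 1)) ∧
      i (t + 1) = (1 / β - 1) + θ * (π t - 1) ∧
      w (t + 1) = β * ((1 + i (t + 1)) / π (t + 1)) * w t := by
  intro t
  have hβ := hβ0.ne'
  refine ⟨?_, ?_, ?_⟩ <;> simp [hπ, hw, hi, hY] <;> field_simp <;> ring
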